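/- For k ∈ ℤ/5ℤ let v_k = (√(cos(π/5)), cos(2πk/5), sin(2πk/5)) ∈ ℝ³. There is no d ∈ ℕ and positive semidefinite matrices A_0, …, A_4 ∈ M_d(ℂ) such that (1/d)·Tr(A_j A_k) = ⟨v_j, v_k⟩ for all j, k ∈ ℤ/5ℤ. -/

import Mathlib

open Real
open scoped ComplexOrder

namespace PentagonAux

open Matrix

variable {d : ℕ}

/-- trace of `Mᴴ * M` as a sum of `normSq`s of entries. -/
lemma trace_conj_mul_self (M : Matrix (Fin d) (Fin d) ℂ) :
    (Mᴴ * M).trace = ((∑ j, ∑ i, Complex.normSq (M i j) : ℝ) : ℂ) := by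
  push_cast
  simp [Matrix.trace, Matrix.mul_apply, Matrix.diag, Matrix.conjTranspose_apply,
    Complex.normSq_eq_conj_mul_self]

lemma eq_zero_of_trace_conj_mul_self (M : Matrix (Fin d) (Fin d) ℂ)
    (h : (Mᴴ * M).trace = 0) : M = 0 := by
  rw [trace_conj_mul_self] at h
  norm_cast at h
  have h2 := (Finset.sum_eq_zero_iff_of_nonneg
    (fun j _ => Finset.sum_nonneg fun i _ => Complex.normSq_nonneg _)).mp h
  ext i j
  have h3 := (Finset.sum_eq_zero_iff_of_nonneg
    (fun i _ => Complex.normSq_nonneg _)).mp (h2 j (Finset.mem_univ _)) i (Finset.mem_univ _)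
  simpa using Complex.normSq_eq_zero.mp h3

lemma both_zero (M N : Matrix (Fin d) (Fin d) ℂ)
    (h : (Mᴴ * M).trace + (Nᴴ * N).trace = 0) : M = 0 ∧ N = 0 := by
  rw [trace_conj_mul_self, trace_conj_mul_self] at h
  norm_cast at h
  have hM0 : (0:ℝ) ≤ ∑ j, ∑ i, Complex.normSq (M i j) :=
    Finset.sum_nonneg fun j _ => Finset.sum_nonneg fun i _ => Complex.normSq_nonneg _
  have hN0 : (0:ℝ) ≤ ∑ j, ∑ i, Complex.normSq (N i j) :=
    Finset.sum_nonneg fun j _ => Finset.sum_nonneg fun i _ => Complex.normSq_nonneg _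
  constructor
  · exact eq_zero_of_trace_conj_mul_self M (by rw [trace_conj_mul_self]; norm_cast; linarith)
  · exact eq_zero_of_trace_conj_mul_self N (by rw [trace_conj_mul_self]; norm_cast; linarith)

open scoped MatrixOrder in
lemma mul_eq_zero_of_trace_eq_zero {A B : Matrix (Fin d) (Fin d) ℂ}
    (hA : A.PosSemidef) (hB : B.PosSemidef) (h : (A * B).trace = 0) : A * B = 0 := by
  have hS := CFC.sqrt_mul_sqrt_self A hA.nonneg
  have hT := CFC.sqrt_mul_sqrt_self B hB.nonneg
  set S := CFC.sqrt A with hSdef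
  set T := CFC.sqrt B with hTdef
  have hSh : Sᴴ = S := (CFC.sqrt_nonneg A).posSemidef.1
  have hTh : Tᴴ = T := (CFC.sqrt_nonneg B).posSemidef.1
  have key : ((S * T)ᴴ * (S * T)).trace = (A * B).trace := by
    rw [Matrix.conjTranspose_mul, hSh, hTh]
    calc ((T * S) * (S * T)).trace = (T * ((S * S) * T)).trace := by
          rw [Matrix.mul_assoc, Matrix.mul_assoc]
      _ = (((S * S) * T) * T).trace := Matrix.trace_mul_comm _ _
      _ = (A * B).trace := by rw [Matrix.mul_assoc, hS, hT]
  have hST : S * T = 0 := eq_zero_of_trace_conj_mul_self _ (by rw [key]; exact h)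
  calc A * B = (S * S) * (T * T) := by rw [hS, hT]
    _ = S * ((S * T) * T) := by simp only [Matrix.mul_assoc]
    _ = 0 := by rw [hST, Matrix.zero_mul, Matrix.mul_zero]

lemma smul_cancel {a : ℂ} (ha : a ≠ 0) {M N : Matrix (Fin d) (Fin d) ℂ}
    (h : a • M = a • N) : M = N := by
  have := congrArg (fun Z => a⁻¹ • Z) h
  simpa [smul_smul, inv_mul_cancel₀ ha] using this

lemma zsum {M : Type*} [AddCommMonoid M] (f : ZMod 5 → M) :
    ∑ k, f k = f 0 + f 1 + f 2 + f 3 + f 4 := by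
  exact Fin.sum_univ_five f

-- value lemmas
lemma co0 : Real.cos (2*π*0/5) = 1 := by norm_num
lemma co1 : Real.cos (2*π*1/5) = 2*Real.cos (π/5)^2 - 1 := by
  rw [show (2*π*1/5 : ℝ) = 2*(π/5) by ring, Real.cos_two_mul]
lemma co2 : Real.cos (2*π*2/5) = -Real.cos (π/5) := by
  rw [show (2*π*2/5 : ℝ) = π - π/5 by ring, Real.cos_pi_sub]
lemma co3 : Real.cos (2*π*3/5) = -Real.cos (π/5) := by
  rw [show (2*π*3/5 : ℝ) = 2*π - 2*π*2/5 by ring, Real.cos_two_pi_sub, co2]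
lemma co4 : Real.cos (2*π*4/5) = 2*Real.cos (π/5)^2 - 1 := by
  rw [show (2*π*4/5 : ℝ) = 2*π - 2*π*1/5 by ring, Real.cos_two_pi_sub, co1]
lemma si0 : Real.sin (2*π*0/5) = 0 := by norm_num
lemma si1 : Real.sin (2*π*1/5) = 2*Real.sin (π/5)*Real.cos (π/5) := by
  rw [show (2*π*1/5 : ℝ) = 2*(π/5) by ring, Real.sin_two_mul]
lemma si2 : Real.sin (2*π*2/5) = Real.sin (π/5) := by
  rw [show (2*π*2/5 : ℝ) = π - π/5 by ring, Real.sin_pi_sub]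
lemma si3 : Real.sin (2*π*3/5) = -Real.sin (π/5) := by
  rw [show (2*π*3/5 : ℝ) = 2*π - 2*π*2/5 by ring, Real.sin_two_pi_sub, si2]
lemma si4 : Real.sin (2*π*4/5) = -(2*Real.sin (π/5)*Real.cos (π/5)) := by
  rw [show (2*π*4/5 : ℝ) = 2*π - 2*π*1/5 by ring, Real.sin_two_pi_sub, si1]
lemma cf0 : Real.cos (4*π*0/5) = 1 := by norm_num
lemma cf1 : Real.cos (4*π*1/5) = -Real.cos (π/5) := by
  rw [show (4*π*1/5 : ℝ) = π - π/5 by ring, Real.cos_pi_sub]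
lemma cf2 : Real.cos (4*π*2/5) = 2*Real.cos (π/5)^2 - 1 := by
  rw [show (4*π*2/5 : ℝ) = 2*π - 2*π*1/5 by ring, Real.cos_two_pi_sub, co1]
lemma cf3 : Real.cos (4*π*3/5) = 2*Real.cos (π/5)^2 - 1 := by
  rw [show (4*π*3/5 : ℝ) = 2*π*1/5 + 2*π by ring, Real.cos_add_two_pi, co1]
lemma cf4 : Real.cos (4*π*4/5) = -Real.cos (π/5) := by
  rw [show (4*π*4/5 : ℝ) = 2*π*3/5 + 2*π by ring, Real.cos_add_two_pi, co3]
lemma sf0 : Real.sin (4*π*0/5) = 0 := by norm_num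
lemma sf1 : Real.sin (4*π*1/5) = Real.sin (π/5) := by
  rw [show (4*π*1/5 : ℝ) = π - π/5 by ring, Real.sin_pi_sub]
lemma sf2 : Real.sin (4*π*2/5) = -(2*Real.sin (π/5)*Real.cos (π/5)) := by
  rw [show (4*π*2/5 : ℝ) = 2*π - 2*π*1/5 by ring, Real.sin_two_pi_sub, si1]
lemma sf3 : Real.sin (4*π*3/5) = 2*Real.sin (π/5)*Real.cos (π/5) := by
  rw [show (4*π*3/5 : ℝ) = 2*π*1/5 + 2*π by ring, Real.sin_add_two_pi, si1]
lemma sf4 : Real.sin (4*π*4/5) = -Real.sin (π/5) := by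
  rw [show (4*π*4/5 : ℝ) = 2*π*3/5 + 2*π by ring, Real.sin_add_two_pi, si3]

lemma v0 : ((0 : ZMod 5)).val = 0 := rfl
lemma v1 : ((1 : ZMod 5)).val = 1 := rfl
lemma v2 : ((2 : ZMod 5)).val = 2 := rfl
lemma v3 : ((3 : ZMod 5)).val = 3 := rfl
lemma v4 : ((4 : ZMod 5)).val = 4 := rfl

end PentagonAux

open PentagonAux Matrix

theorem pentagon_not_realizable_by_posSemidef_matrices :
    ¬ ∃ (d : ℕ), 0 < d ∧ ∃ A : ZMod 5 → Matrix (Fin d) (Fin d) ℂ,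
      (∀ k, (A k).PosSemidef) ∧
      ∀ j k : ZMod 5, (1 / (d : ℂ)) * (A j * A k).trace =
        ((∑ i, (![Real.sqrt (cos (π / 5)), cos (2 * π * (j.val : ℝ) / 5),
                  sin (2 * π * (j.val : ℝ) / 5)] i) *
                (![Real.sqrt (cos (π / 5)), cos (2 * π * (k.val : ℝ) / 5),
                  sin (2 * π * (k.val : ℝ) / 5)] i) : ℝ) : ℂ) := by
  rintro ⟨d, hd, A, hpsd, h⟩
  have hd' : (d : ℂ) ≠ 0 := Nat.cast_ne_zero.mpr hd.ne'
  have hcnn : 0 ≤ Real.cos (π/5) :=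
    Real.cos_nonneg_of_mem_Icc ⟨by linarith [Real.pi_pos], by linarith [Real.pi_pos]⟩
  have hq : 4*Real.cos (π/5)^2 - 2*Real.cos (π/5) - 1 = 0 := Real.quadratic_root_cos_pi_div_five
  have hqC : 4*(Real.cos (π/5):ℂ)^2 - 2*(Real.cos (π/5):ℂ) - 1 = 0 := by exact_mod_cast hq
  have hspos : 0 < Real.sin (π/5) :=
    Real.sin_pos_of_pos_of_lt_pi (by positivity) (by linarith [Real.pi_pos])
  have hsC : ((Real.sin (π/5) : ℝ) : ℂ) ≠ 0 := by
    exact_mod_cast Complex.ofReal_ne_zero.mpr hspos.ne'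
  -- clean form of the hypothesis
  have hC : ∀ j k : ZMod 5, (A j * A k).trace =
      (d : ℂ) * ((Real.cos (π/5)
        + Real.cos (2*π*(j.val:ℝ)/5) * Real.cos (2*π*(k.val:ℝ)/5)
        + Real.sin (2*π*(j.val:ℝ)/5) * Real.sin (2*π*(k.val:ℝ)/5) : ℝ) : ℂ) := by
    intro j k
    have hh := h j k
    rw [Fin.sum_univ_three] at hh
    simp only [Matrix.cons_val_zero, Matrix.cons_val_one, Matrix.cons_val_two, Matrix.tail_cons, Matrix.head_cons] at hh
    rw [Real.mul_self_sqrt hcnn] at hh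
    have h2 : (A j * A k).trace = (d:ℂ) * ((1/(d:ℂ)) * (A j * A k).trace) := by
      field_simp
    rw [h2, hh]

  have hsq1 : Real.sin (π/5)^2 + Real.cos (π/5)^2 = 1 := Real.sin_sq_add_cos_sq _
  have hsqC : (Real.sin (π/5):ℂ)^2 + (Real.cos (π/5):ℂ)^2 = 1 := by exact_mod_cast hsq1
  have vsimp := And.intro v0 (And.intro v1 (And.intro v2 (And.intro v3 v4)))
  -- orthogonality
  have o02 : A 0 * A 2 = 0 := by
    apply mul_eq_zero_of_trace_eq_zero (hpsd 0) (hpsd 2)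
    rw [hC 0 2]
    simp only [v0, v2, Nat.cast_zero, Nat.cast_ofNat, co0, co2, si0, si2]
    push_cast [-Complex.ofReal_cos, -Complex.ofReal_sin]
    ring
  have o03 : A 0 * A 3 = 0 := by
    apply mul_eq_zero_of_trace_eq_zero (hpsd 0) (hpsd 3)
    rw [hC 0 3]
    simp only [v0, v3, Nat.cast_zero, Nat.cast_ofNat, co0, co3, si0, si3]
    push_cast [-Complex.ofReal_cos, -Complex.ofReal_sin]
    ring
  have o20 : A 2 * A 0 = 0 := by
    apply mul_eq_zero_of_trace_eq_zero (hpsd 2) (hpsd 0)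
    rw [hC 2 0]
    simp only [v0, v2, Nat.cast_zero, Nat.cast_ofNat, co0, co2, si0, si2]
    push_cast [-Complex.ofReal_cos, -Complex.ofReal_sin]
    ring
  have o13 : A 1 * A 3 = 0 := by
    apply mul_eq_zero_of_trace_eq_zero (hpsd 1) (hpsd 3)
    rw [hC 1 3]
    simp only [v1, v3, Nat.cast_one, Nat.cast_ofNat, co1, co3, si1, si3]
    push_cast [-Complex.ofReal_cos, -Complex.ofReal_sin]
    linear_combination ((d:ℂ) * (-2*(Real.cos (π/5):ℂ))) * hsqC
  have o14 : A 1 * A 4 = 0 := by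
    apply mul_eq_zero_of_trace_eq_zero (hpsd 1) (hpsd 4)
    rw [hC 1 4]
    simp only [v1, v4, Nat.cast_one, Nat.cast_ofNat, co1, co4, si1, si4]
    push_cast [-Complex.ofReal_cos, -Complex.ofReal_sin]
    linear_combination ((d:ℂ) * (-4*(Real.cos (π/5):ℂ)^2)) * hsqC
      + ((d:ℂ) * (2*(Real.cos (π/5):ℂ)^2 + (Real.cos (π/5):ℂ) - 1)) * hqC
  have o24 : A 2 * A 4 = 0 := by
    apply mul_eq_zero_of_trace_eq_zero (hpsd 2) (hpsd 4)
    rw [hC 2 4]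
    simp only [v2, v4, Nat.cast_ofNat, co2, co4, si2, si4]
    push_cast [-Complex.ofReal_cos, -Complex.ofReal_sin]
    linear_combination ((d:ℂ) * (-2*(Real.cos (π/5):ℂ))) * hsqC

  -- the two vanishing linear combinations
  set X := ∑ k : ZMod 5, ((Real.cos (4*π*(k.val:ℝ)/5) : ℝ) : ℂ) • A k with hXdef
  set Y := ∑ k : ZMod 5, ((Real.sin (4*π*(k.val:ℝ)/5) : ℝ) : ℂ) • A k with hYdef
  have hXh : Xᴴ = X := by
    rw [hXdef, Matrix.conjTranspose_sum]
    refine Finset.sum_congr rfl fun k _ => ?_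
    rw [Matrix.conjTranspose_smul, (hpsd k).1.eq]
    congr 1
    simp only [Complex.star_def, Complex.conj_ofReal]
  have hYh : Yᴴ = Y := by
    rw [hYdef, Matrix.conjTranspose_sum]
    refine Finset.sum_congr rfl fun k _ => ?_
    rw [Matrix.conjTranspose_smul, (hpsd k).1.eq]
    congr 1
    simp only [Complex.star_def, Complex.conj_ofReal]
  have hXX : (Xᴴ * X).trace
      = ∑ j : ZMod 5, ∑ k : ZMod 5,
        (((Real.cos (4*π*(j.val:ℝ)/5) : ℝ):ℂ) * ((Real.cos (4*π*(k.val:ℝ)/5) : ℝ):ℂ))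
          * (A j * A k).trace := by
    rw [hXh, hXdef, Finset.sum_mul_sum, Matrix.trace_sum]
    refine Finset.sum_congr rfl fun j _ => ?_
    rw [Matrix.trace_sum]
    refine Finset.sum_congr rfl fun k _ => ?_
    rw [Matrix.smul_mul, Matrix.mul_smul, smul_smul, Matrix.trace_smul, smul_eq_mul]
  have hYY : (Yᴴ * Y).trace
      = ∑ j : ZMod 5, ∑ k : ZMod 5,
        (((Real.sin (4*π*(j.val:ℝ)/5) : ℝ):ℂ) * ((Real.sin (4*π*(k.val:ℝ)/5) : ℝ):ℂ))
          * (A j * A k).trace := by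
    rw [hYh, hYdef, Finset.sum_mul_sum, Matrix.trace_sum]
    refine Finset.sum_congr rfl fun j _ => ?_
    rw [Matrix.trace_sum]
    refine Finset.sum_congr rfl fun k _ => ?_
    rw [Matrix.smul_mul, Matrix.mul_smul, smul_smul, Matrix.trace_smul, smul_eq_mul]
  have hkey : (Xᴴ * X).trace + (Yᴴ * Y).trace = 0 := by
    rw [hXX, hYY]
    simp only [hC]
    simp only [zsum]
    simp only [v0, v1, v2, v3, v4, Nat.cast_zero, Nat.cast_one, Nat.cast_ofNat,
      co0, co1, co2, co3, co4, si0, si1, si2, si3, si4,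
      cf0, cf1, cf2, cf3, cf4, sf0, sf1, sf2, sf3, sf4]
    push_cast [-Complex.ofReal_cos, -Complex.ofReal_sin]
    linear_combination ((d:ℂ) * (16*(Real.cos (π/5):ℂ)^4 + 12*(Real.cos (π/5):ℂ)^3
      - 10*(Real.cos (π/5):ℂ)^2 - 7*(Real.cos (π/5):ℂ) - 1)) * hqC
  obtain ⟨hX0, hY0⟩ := both_zero X Y hkey

  -- relations from X = 0, Y = 0
  have hr0 : ∑ k : ZMod 5, ((Real.cos (4*π*(k.val:ℝ)/5) : ℝ) : ℂ) • (A 0 * A k) = 0 := by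
    have h' : A 0 * X = 0 := by rw [hX0, Matrix.mul_zero]
    rw [hXdef, Finset.mul_sum] at h'
    simpa only [Matrix.mul_smul] using h'
  have hs0 : ∑ k : ZMod 5, ((Real.sin (4*π*(k.val:ℝ)/5) : ℝ) : ℂ) • (A 0 * A k) = 0 := by
    have h' : A 0 * Y = 0 := by rw [hY0, Matrix.mul_zero]
    rw [hYdef, Finset.mul_sum] at h'
    simpa only [Matrix.mul_smul] using h'
  have hr1 : ∑ k : ZMod 5, ((Real.cos (4*π*(k.val:ℝ)/5) : ℝ) : ℂ) • (A 1 * A k) = 0 := by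
    have h' : A 1 * X = 0 := by rw [hX0, Matrix.mul_zero]
    rw [hXdef, Finset.mul_sum] at h'
    simpa only [Matrix.mul_smul] using h'
  have hs1 : ∑ k : ZMod 5, ((Real.sin (4*π*(k.val:ℝ)/5) : ℝ) : ℂ) • (A 1 * A k) = 0 := by
    have h' : A 1 * Y = 0 := by rw [hY0, Matrix.mul_zero]
    rw [hYdef, Finset.mul_sum] at h'
    simpa only [Matrix.mul_smul] using h'
  have hr2 : ∑ k : ZMod 5, ((Real.cos (4*π*(k.val:ℝ)/5) : ℝ) : ℂ) • (A 2 * A k) = 0 := by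
    have h' : A 2 * X = 0 := by rw [hX0, Matrix.mul_zero]
    rw [hXdef, Finset.mul_sum] at h'
    simpa only [Matrix.mul_smul] using h'
  have hs2 : ∑ k : ZMod 5, ((Real.sin (4*π*(k.val:ℝ)/5) : ℝ) : ℂ) • (A 2 * A k) = 0 := by
    have h' : A 2 * Y = 0 := by rw [hY0, Matrix.mul_zero]
    rw [hYdef, Finset.mul_sum] at h'
    simpa only [Matrix.mul_smul] using h'
  rw [zsum] at hr0 hs0 hr1 hs1 hr2 hs2
  simp only [v0, v1, v2, v3, v4, Nat.cast_zero, Nat.cast_one, Nat.cast_ofNat,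
    co0, co1, co2, co3, co4, si0, si1, si2, si3, si4,
    cf0, cf1, cf2, cf3, cf4, sf0, sf1, sf2, sf3, sf4,
    o02, o03, o13, o14, o20, o24, smul_zero, add_zero, zero_add,
    Complex.ofReal_zero, zero_smul, Complex.ofReal_one, one_smul] at hr0 hs0 hr1 hs1 hr2 hs2
  push_cast [-Complex.ofReal_cos, -Complex.ofReal_sin] at hr0 hs0 hr1 hs1 hr2 hs2
  -- hr0 : A0A0 - c•A0A1 - c•A0A4 = 0 ; hs0 : s•A0A1 - s•A0A4 = 0
  have h0eq : A 0 * A 1 = A 0 * A 4 := by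
    apply smul_cancel hsC
    linear_combination (norm := module) hs0
  have hA00 : A 0 * A 0 = (2*(Real.cos (π/5):ℂ)) • (A 0 * A 1) := by
    linear_combination (norm := module) hr0 - ((Real.cos (π/5):ℝ):ℂ) • h0eq
  -- hr1 : A1A0 - c•A1A1 + (2c²-1)•A1A2 = 0 ; hs1 : s•A1A1 - 2sc•A1A2 = 0
  have hm11 : A 1 * A 1 = (2*(Real.cos (π/5):ℂ)) • (A 1 * A 2) := by
    apply smul_cancel hsC
    linear_combination (norm := module) hs1
  have h12 : A 1 * A 0 = A 1 * A 2 := by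
    linear_combination (norm := module) hr1 + ((Real.cos (π/5):ℝ):ℂ) • hm11
  have hsq1m : A 1 * A 1 = (2*(Real.cos (π/5):ℂ)) • (A 1 * A 0) := by
    linear_combination (norm := module) hm11 - (2*(Real.cos (π/5):ℂ)) • h12
  -- hr2 : -c•A2A1 + (2c²-1)•A2A2 + (2c²-1)•A2A3 = 0 ; hs2 : s•A2A1 - 2sc•A2A2 + 2sc•A2A3 = 0
  have hm21 : A 2 * A 1 = (2*(Real.cos (π/5):ℂ)) • (A 2 * A 2)
      - (2*(Real.cos (π/5):ℂ)) • (A 2 * A 3) := by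
    apply smul_cancel hsC
    linear_combination (norm := module) hs2
  have h2a : A 2 * A 2 = (4*(Real.cos (π/5):ℂ)^2 - 1) • (A 2 * A 3) := by
    linear_combination (norm := module) -hr2 - ((Real.cos (π/5):ℝ):ℂ) • hm21
  have hscalar1 : (4*(Real.cos (π/5):ℂ)^2 - 1) = 2*(Real.cos (π/5):ℂ) := by
    linear_combination hqC
  rw [hscalar1] at h2a
  have h23' : A 2 * A 1 = (4*(Real.cos (π/5):ℂ)^2 - 2*(Real.cos (π/5):ℂ)) • (A 2 * A 3) := by
    linear_combination (norm := module) hm21 + (2*(Real.cos (π/5):ℂ)) • h2a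
  have hscalar2 : (4*(Real.cos (π/5):ℂ)^2 - 2*(Real.cos (π/5):ℂ)) = 1 := by
    linear_combination hqC
  rw [hscalar2, one_smul] at h23'
  have hsq2m : A 2 * A 2 = (2*(Real.cos (π/5):ℂ)) • (A 2 * A 1) := by rw [h23']; exact h2a
  -- all squares are equal
  have hstar2c : star (2*(Real.cos (π/5):ℂ)) = 2*(Real.cos (π/5):ℂ) := by
    simp [Complex.star_def, Complex.conj_ofReal]
  have he01 : A 1 * A 1 = A 0 * A 0 := by
    calc A 1 * A 1 = (2*(Real.cos (π/5):ℂ)) • (A 1 * A 0) := hsq1m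
      _ = ((2*(Real.cos (π/5):ℂ)) • (A 0 * A 1))ᴴ := by
          rw [Matrix.conjTranspose_smul, Matrix.conjTranspose_mul,
            (hpsd 0).1.eq, (hpsd 1).1.eq, hstar2c]
      _ = (A 0 * A 0)ᴴ := by rw [← hA00]
      _ = A 0 * A 0 := by rw [Matrix.conjTranspose_mul, (hpsd 0).1.eq]
  have he12 : A 2 * A 2 = A 1 * A 1 := by
    calc A 2 * A 2 = (2*(Real.cos (π/5):ℂ)) • (A 2 * A 1) := hsq2m
      _ = ((2*(Real.cos (π/5):ℂ)) • (A 1 * A 2))ᴴ := by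
          rw [Matrix.conjTranspose_smul, Matrix.conjTranspose_mul,
            (hpsd 1).1.eq, (hpsd 2).1.eq, hstar2c]
      _ = (A 1 * A 1)ᴴ := by rw [← hm11]
      _ = A 1 * A 1 := by rw [Matrix.conjTranspose_mul, (hpsd 1).1.eq]
  -- contradiction
  have hz : (A 0 * A 0) * (A 0 * A 0) = 0 := by
    have e : A 2 * A 2 = A 0 * A 0 := he12.trans he01
    calc (A 0 * A 0) * (A 0 * A 0) = (A 0 * A 0) * (A 2 * A 2) := by rw [e]
      _ = A 0 * ((A 0 * A 2) * A 2) := by simp only [Matrix.mul_assoc]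
      _ = 0 := by rw [o02, Matrix.zero_mul, Matrix.mul_zero]
  have h00 : A 0 * A 0 = 0 := by
    have hH : (A 0 * A 0)ᴴ = A 0 * A 0 := by rw [Matrix.conjTranspose_mul, (hpsd 0).1.eq]
    exact Matrix.conjTranspose_mul_self_eq_zero.mp (by rw [hH]; exact hz)
  have hA0 : A 0 = 0 := by
    refine Matrix.conjTranspose_mul_self_eq_zero.mp ?_
    rw [(hpsd 0).1.eq]
    exact h00
  have hfin := hC 0 0
  rw [hA0] at hfin
  simp only [Matrix.zero_mul, Matrix.trace_zero, v0, Nat.cast_zero, co0, si0] at hfin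
  -- hfin : 0 = ↑d * ↑(cos (π/5) + 1*1 + 0*0)
  have : ((Real.cos (π/5) + 1*1 + 0*0 : ℝ) : ℂ) = 0 := by
    rcases mul_eq_zero.mp hfin.symm with h' | h'
    · exact absurd h' hd'
    · exact h'
  rw [Complex.ofReal_eq_zero] at this
  linarith [hcnn]
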